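/- (Example 1, Condition 6 for the exponential kernel.) In the perturbed-grid setting with grid enumeration, the positivity condition on the θ-derivatives of the exponential kernel holds: for every θ₀ = (θ₁, θ₂) ∈ (0,∞)² and every pair (λ₁, λ₂) ≠ (0,0) of real numbers, liminf_{n→∞} (1/n) Σ_{i,j=1}^n ((λ₁ − λ₂ θ₁ g_{ij}) e^{−θ₂ g_{ij}})² > 0, where g_{ij} := ‖f_i − f_j‖. -/

import Mathlib

open Filter
open scoped Topology InnerProductSpace

section AuxPG

variable {H : Type*} [NormedAddCommGroup H] [InnerProductSpace ℝ H] [CompleteSpace H]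

lemma pg_tail_summable (e : HilbertBasis ℕ ℝ H) (d₀ : ℕ) (c : ℕ → ℝ) (s : ℕ → ℝ)
    (hc : ∀ k, c k ^ 2 ≤ s (d₀ + k) ^ 2) (hssum : Summable fun k : ℕ => s (d₀ + k) ^ 2) :
    Summable fun k : ℕ => c k • e (d₀ + k) := by
  have hv : Orthonormal ℝ (fun k : ℕ => e (d₀ + k)) :=
    e.orthonormal.comp (fun k => d₀ + k) (add_right_injective d₀)
  have h2 : Summable fun k : ℕ => ‖c k‖ ^ 2 := by
    refine Summable.of_nonneg_of_le (fun k => by positivity) (fun k => ?_) hssum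
    simpa [Real.norm_eq_abs, sq_abs] using hc k
  have h3 := (hv.orthogonalFamily.summable_iff_norm_sq_summable c).2 h2
  simpa [LinearIsometry.toSpanSingleton_apply] using h3

lemma pg_tail_normSq (e : HilbertBasis ℕ ℝ H) (d₀ : ℕ) (c : ℕ → ℝ)
    (hsum : Summable fun k : ℕ => c k • e (d₀ + k)) :
    HasSum (fun k : ℕ => c k ^ 2) (‖∑' k : ℕ, c k • e (d₀ + k)‖ ^ 2) := by
  have hv : Orthonormal ℝ (fun k : ℕ => e (d₀ + k)) :=
    e.orthonormal.comp (fun k => d₀ + k) (add_right_injective d₀)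
  have hT := hsum.hasSum
  have h1 : Filter.Tendsto (fun F : Finset ℕ => ‖∑ k ∈ F, c k • e (d₀ + k)‖ ^ 2) atTop
      (𝓝 (‖∑' k : ℕ, c k • e (d₀ + k)‖ ^ 2)) :=
    ((continuous_norm.pow 2).tendsto _).comp hT
  have h2 : (fun F : Finset ℕ => ‖∑ k ∈ F, c k • e (d₀ + k)‖ ^ 2)
      = fun F : Finset ℕ => ∑ k ∈ F, c k ^ 2 := by
    funext F
    have h3 := hv.orthogonalFamily.norm_sum c F
    simpa [LinearIsometry.toSpanSingleton_apply, Real.norm_eq_abs, sq_abs] using h3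
  rw [h2] at h1
  exact h1

lemma pg_tail_inner_eq_zero (e : HilbertBasis ℕ ℝ H) (d₀ : ℕ) (c : ℕ → ℝ)
    (hsum : Summable fun k : ℕ => c k • e (d₀ + k)) {j : ℕ} (hj : j < d₀) :
    ⟪e j, (∑' k : ℕ, c k • e (d₀ + k))⟫_ℝ = 0 := by
  have h := hsum.hasSum.mapL (innerSL ℝ (e j))
  have h0 : (fun k : ℕ => (innerSL ℝ (e j)) (c k • e (d₀ + k))) = fun _ => (0:ℝ) := by
    funext k
    have hz : ⟪e j, e (d₀ + k)⟫_ℝ = 0 := e.orthonormal.2 (by omega)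
    simp [real_inner_smul_right, hz]
  rw [h0] at h
  simpa using h.unique hasSum_zero

end AuxPG

/-- The perturbed-grid input
`f_i = Σ_{k=1}^{d₀} ((x_i)_k + δ ξ_{i,k}) e_k + Σ_{k>d₀} ξ_{i,k} s_k e_k`. -/
noncomputable def perturbedGridInput {H : Type*} [NormedAddCommGroup H]
    [InnerProductSpace ℝ H] [CompleteSpace H] (e : HilbertBasis ℕ ℝ H)
    (d₀ : ℕ) (δ : ℝ) (ξ : ℕ → ℕ → ℝ) (s : ℕ → ℝ) (x : ℕ → ℕ → ℕ) (i : ℕ) : H :=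
  (∑ k ∈ Finset.range d₀, (((x i k : ℝ)) + δ * ξ i k) • e k)
    + ∑' k : ℕ, (ξ i (d₀ + k) * s (d₀ + k)) • e (d₀ + k)

section AuxPG2

variable {H : Type*} [NormedAddCommGroup H] [InnerProductSpace ℝ H] [CompleteSpace H]

lemma pg_coeff (e : HilbertBasis ℕ ℝ H) (d₀ : ℕ) (δ : ℝ) (ξ : ℕ → ℕ → ℝ) (s : ℕ → ℝ)
    (x : ℕ → ℕ → ℕ) (i : ℕ)
    (hsum : Summable fun k : ℕ => (ξ i (d₀ + k) * s (d₀ + k)) • e (d₀ + k))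
    {j : ℕ} (hj : j < d₀) :
    ⟪e j, perturbedGridInput e d₀ δ ξ s x i⟫_ℝ = (x i j : ℝ) + δ * ξ i j := by
  unfold perturbedGridInput
  rw [inner_add_right, pg_tail_inner_eq_zero e d₀ _ hsum hj, add_zero, inner_sum]
  have h : ∀ k ∈ Finset.range d₀, ⟪e j, (((x i k : ℝ)) + δ * ξ i k) • e k⟫_ℝ
      = if k = j then ((x i j : ℝ) + δ * ξ i j) else 0 := by
    intro k _
    rcases eq_or_ne k j with rfl | hkj
    · have h1 : ⟪e k, e k⟫_ℝ = 1 := by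
        rw [real_inner_self_eq_norm_sq, e.orthonormal.1 k, one_pow]
      simp [real_inner_smul_right, h1, e.orthonormal.1 k]
    · have h0 : ⟪e j, e k⟫_ℝ = 0 := e.orthonormal.2 (Ne.symm hkj)
      simp [real_inner_smul_right, h0, hkj]
  rw [Finset.sum_congr rfl h, Finset.sum_ite_eq' (Finset.range d₀) j]
  simp [Finset.mem_range.mpr hj]

end AuxPG2

set_option maxHeartbeats 1600000 in
/-- Example 1, positivity of the θ-derivatives (Condition 6) for the exponential kernel
`K_θ(f,g) = θ₁ e^{−θ₂‖f−g‖}` on the perturbed grid with grid enumeration: for every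
`θ₀ = (θ₁,θ₂) ∈ (0,∞)²` and every `(λ₁,λ₂) ≠ (0,0)`,
`liminf_n (1/n) Σ_{i,j} ((λ₁ − λ₂ θ₁ g_{ij}) e^{−θ₂ g_{ij}})² > 0`. -/
theorem perturbedGrid_exponential_positivity
    {H : Type*} [NormedAddCommGroup H] [InnerProductSpace ℝ H] [CompleteSpace H]
    (e : HilbertBasis ℕ ℝ H)
    (d₀ : ℕ) (hd₀ : 1 ≤ d₀)
    (δ : ℝ) (hδ0 : 0 ≤ δ) (hδ : δ < 1 / 2)
    (ξ : ℕ → ℕ → ℝ) (hξ : ∀ i k, |ξ i k| ≤ 1)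
    (s : ℕ → ℝ) (hs0 : ∀ k, d₀ ≤ k → 0 ≤ s k)
    (hssum : Summable fun k : ℕ => s (d₀ + k) ^ 2)
    -- the grid enumeration property: {x_1, …, x_{m^{d₀}}} = {1, …, m}^{d₀}
    (x : ℕ → ℕ → ℕ)
    (hgrid : ∀ m : ℕ, 1 ≤ m →
      Finset.image (fun i => fun k : Fin d₀ => x i (k : ℕ)) (Finset.range (m ^ d₀))
        = Fintype.piFinset fun _ : Fin d₀ => Finset.Icc 1 m)
    (θ₁ θ₂ : ℝ) (hθ₁ : 0 < θ₁) (hθ₂ : 0 < θ₂)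
    (lam₁ lam₂ : ℝ) (hlam : (lam₁, lam₂) ≠ (0, 0)) :
    ∃ β > (0 : ℝ), ∀ᶠ n : ℕ in atTop,
      β ≤ (1 / (n : ℝ)) * ∑ i ∈ Finset.range n, ∑ j ∈ Finset.range n,
        ((lam₁ - lam₂ * θ₁ *
            ‖perturbedGridInput e d₀ δ ξ s x i - perturbedGridInput e d₀ δ ξ s x j‖)
          * Real.exp (-θ₂ *
            ‖perturbedGridInput e d₀ δ ξ s x i - perturbedGridInput e d₀ δ ξ s x j‖)) ^ 2 := by
  classical
  set F : ℕ → H := perturbedGridInput e d₀ δ ξ s x with hF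
  set t : ℕ → ℕ → ℝ := fun i j =>
    ((lam₁ - lam₂ * θ₁ * ‖F i - F j‖) * Real.exp (-θ₂ * ‖F i - F j‖)) ^ 2 with ht
  have htnn : ∀ i j, 0 ≤ t i j := fun i j => by rw [ht]; positivity
  rcases ne_or_eq lam₁ 0 with hl1 | hl1
  · -- diagonal terms suffice
    refine ⟨lam₁ ^ 2, by positivity, ?_⟩
    filter_upwards [eventually_ge_atTop 1] with n hn
    have hdiag : ∀ i : ℕ, t i i = lam₁ ^ 2 := by
      intro i
      rw [ht]
      simp
    have h1 : (n : ℝ) * lam₁ ^ 2 ≤ ∑ i ∈ Finset.range n, ∑ j ∈ Finset.range n, t i j := by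
      calc (n : ℝ) * lam₁ ^ 2 = ∑ i ∈ Finset.range n, t i i := by
            rw [Finset.sum_congr rfl fun i _ => hdiag i]
            simp [mul_comm]
        _ ≤ ∑ i ∈ Finset.range n, ∑ j ∈ Finset.range n, t i j :=
            Finset.sum_le_sum fun i hi =>
              Finset.single_le_sum (fun j _ => htnn i j) hi
    have hn' : (0:ℝ) < (n:ℝ) := by exact_mod_cast hn
    calc lam₁ ^ 2 = 1 / (n:ℝ) * ((n:ℝ) * lam₁ ^ 2) := by field_simp
      _ ≤ _ := mul_le_mul_of_nonneg_left h1 (by positivity)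
  · -- lam₁ = 0, use neighbor pairs on the grid
    subst hl1
    have hl2 : lam₂ ≠ 0 := by simpa [Prod.ext_iff] using hlam
    set S : ℝ := ∑' k : ℕ, s (d₀ + k) ^ 2 with hS
    have hS0 : 0 ≤ S := tsum_nonneg fun k => sq_nonneg _
    set a : ℝ := 1 - 2 * δ with ha
    have ha0 : 0 < a := by rw [ha]; linarith
    set Cb : ℝ := 1 + d₀ + 2 * Real.sqrt S with hCb
    have hCb0 : 0 < Cb := by positivity
    have hbase : lam₂ * θ₁ * a * Real.exp (-θ₂ * Cb) ≠ 0 :=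
      mul_ne_zero (mul_ne_zero (mul_ne_zero hl2 (ne_of_gt hθ₁)) (ne_of_gt ha0))
        (Real.exp_pos _).ne'
    set c₀ : ℝ := (lam₂ * θ₁ * a * Real.exp (-θ₂ * Cb)) ^ 2 with hc₀
    have hc₀0 : 0 < c₀ := lt_of_le_of_ne (sq_nonneg _) (Ne.symm (pow_ne_zero 2 hbase))
    -- tail facts
    have hc2 : ∀ i k, (ξ i (d₀ + k) * s (d₀ + k)) ^ 2 ≤ s (d₀ + k) ^ 2 := by
      intro i k
      have h1 : |ξ i (d₀ + k) * s (d₀ + k)| ≤ |s (d₀ + k)| := by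
        rw [abs_mul]
        exact mul_le_of_le_one_left (abs_nonneg _) (hξ i _)
      simpa [sq_abs, mul_pow] using pow_le_pow_left₀ (abs_nonneg _) h1 2
    have hsumm : ∀ i, Summable fun k : ℕ => (ξ i (d₀ + k) * s (d₀ + k)) • e (d₀ + k) :=
      fun i => pg_tail_summable e d₀ _ s (hc2 i) hssum
    set T : ℕ → H := fun i => ∑' k : ℕ, (ξ i (d₀ + k) * s (d₀ + k)) • e (d₀ + k) with hT
    have hTnorm : ∀ i, ‖T i‖ ≤ Real.sqrt S := by
      intro i
      have h1 := pg_tail_normSq e d₀ _ (hsumm i)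
      have h2 : ‖T i‖ ^ 2 ≤ S := by
        rw [hT]
        rw [← h1.tsum_eq]
        exact Summable.tsum_le_tsum (fun k => hc2 i k) h1.summable hssum
      calc ‖T i‖ = Real.sqrt (‖T i‖ ^ 2) := (Real.sqrt_sq (norm_nonneg _)).symm
        _ ≤ Real.sqrt S := Real.sqrt_le_sqrt h2
    have hFi : ∀ i, F i = (∑ k ∈ Finset.range d₀, (((x i k : ℝ)) + δ * ξ i k) • e k) + T i :=
      fun i => rfl
    -- lower bound on distances via a single coordinate
    have hlow : ∀ i j k, k < d₀ →
        |((x i k : ℝ) - x j k) + δ * (ξ i k - ξ j k)| ≤ ‖F i - F j‖ := by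
      intro i j k hk
      have h1 : ⟪e k, F i - F j⟫_ℝ = ((x i k : ℝ) - x j k) + δ * (ξ i k - ξ j k) := by
        rw [hF, inner_sub_right, pg_coeff e d₀ δ ξ s x i (hsumm i) hk,
          pg_coeff e d₀ δ ξ s x j (hsumm j) hk]
        ring
      calc |((x i k : ℝ) - x j k) + δ * (ξ i k - ξ j k)| = |⟪e k, F i - F j⟫_ℝ| := by rw [h1]
        _ ≤ ‖e k‖ * ‖F i - F j‖ := abs_real_inner_le_norm _ _
        _ = ‖F i - F j‖ := by rw [e.orthonormal.1 k, one_mul]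
    -- upper bound on distances
    have hup : ∀ i j, ‖F i - F j‖ ≤
        (∑ k ∈ Finset.range d₀, |((x i k : ℝ) + δ * ξ i k) - ((x j k : ℝ) + δ * ξ j k)|)
          + 2 * Real.sqrt S := by
      intro i j
      have hdec : F i - F j =
          (∑ k ∈ Finset.range d₀,
            ((((x i k : ℝ)) + δ * ξ i k) - (((x j k : ℝ)) + δ * ξ j k)) • e k)
            + (T i - T j) := by
        rw [hFi i, hFi j]
        rw [show (∑ k ∈ Finset.range d₀,
            ((((x i k : ℝ)) + δ * ξ i k) - (((x j k : ℝ)) + δ * ξ j k)) • e k)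
          = (∑ k ∈ Finset.range d₀, (((x i k : ℝ)) + δ * ξ i k) • e k)
            - (∑ k ∈ Finset.range d₀, (((x j k : ℝ)) + δ * ξ j k) • e k) by
            rw [← Finset.sum_sub_distrib]
            exact Finset.sum_congr rfl fun k _ => sub_smul _ _ _]
        abel
      rw [hdec]
      have h1 : ‖∑ k ∈ Finset.range d₀,
          ((((x i k : ℝ)) + δ * ξ i k) - (((x j k : ℝ)) + δ * ξ j k)) • e k‖
          ≤ ∑ k ∈ Finset.range d₀, |((x i k : ℝ) + δ * ξ i k) - ((x j k : ℝ) + δ * ξ j k)| := by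
        refine (norm_sum_le _ _).trans (le_of_eq (Finset.sum_congr rfl fun k _ => ?_))
        rw [norm_smul, e.orthonormal.1 k, mul_one, Real.norm_eq_abs]
      calc ‖_ + (T i - T j)‖ ≤ ‖_‖ + ‖T i - T j‖ := norm_add_le _ _
        _ ≤ (∑ k ∈ Finset.range d₀, |((x i k : ℝ) + δ * ξ i k) - ((x j k : ℝ) + δ * ξ j k)|)
            + (‖T i‖ + ‖T j‖) := add_le_add h1 (norm_sub_le _ _)
        _ ≤ _ := by
            have := hTnorm i
            have := hTnorm j
            linarith
    refine ⟨c₀ / 2 ^ d₀, by positivity, ?_⟩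
    filter_upwards [eventually_ge_atTop (2 ^ d₀)] with n hn
    have hn1 : 1 ≤ n := le_trans Nat.one_le_two_pow hn
    set m : ℕ := Nat.findGreatest (fun m => m ^ d₀ ≤ n) n with hm
    have hm1 : m ^ d₀ ≤ n :=
      Nat.findGreatest_spec (P := fun m => m ^ d₀ ≤ n) (m := 1) hn1 (by simpa using hn1)
    have hm2 : n < (m + 1) ^ d₀ := by
      by_cases h : m + 1 ≤ n
      · by_contra hcon
        push_neg at hcon
        exact Nat.findGreatest_is_greatest (P := fun m => m ^ d₀ ≤ n) (by omega) h hcon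
      · push_neg at h
        have hmn : m ≤ n := Nat.findGreatest_le n
        have : m = n := by omega
        calc n < n + 1 := Nat.lt_succ_self n
          _ ≤ (m + 1) ^ d₀ := by
              rw [this]
              exact Nat.le_self_pow (by omega) _
    have hmge2 : 2 ≤ m := by
      by_contra h
      push_neg at h
      have : (m + 1) ^ d₀ ≤ 2 ^ d₀ := Nat.pow_le_pow_left (by omega) d₀
      omega
    have hm1' : 1 ≤ m := by omega
    have hgridm := hgrid m hm1'
    have hmem : ∀ i, i < m ^ d₀ → ∀ k : Fin d₀, x i (k : ℕ) ∈ Finset.Icc 1 m := by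
      intro i hi k
      have hmemi : (fun k : Fin d₀ => x i (k : ℕ)) ∈
          Fintype.piFinset fun _ : Fin d₀ => Finset.Icc 1 m := by
        rw [← hgridm]
        exact Finset.mem_image_of_mem _ (Finset.mem_range.mpr hi)
      exact (Fintype.mem_piFinset.mp hmemi) k
    have key : ∀ i ∈ Finset.range (m ^ d₀), ∃ j ∈ Finset.range n, c₀ ≤ t i j := by
      intro i hi
      rw [Finset.mem_range] at hi
      set k0 : Fin d₀ := ⟨0, hd₀⟩ with hk0
      have hxi0 : 1 ≤ x i 0 ∧ x i 0 ≤ m := by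
        have hx := hmem i hi k0
        rw [Finset.mem_Icc] at hx
        exact hx
      set v : ℕ := if x i 0 < m then x i 0 + 1 else x i 0 - 1 with hv
      have hvmem : v ∈ Finset.Icc 1 m := by
        rw [Finset.mem_Icc, hv]
        split_ifs with h <;> omega
      set q : Fin d₀ → ℕ := Function.update (fun k : Fin d₀ => x i (k : ℕ)) k0 v with hq
      have hqmem : q ∈ Fintype.piFinset fun _ : Fin d₀ => Finset.Icc 1 m := by
        rw [Fintype.mem_piFinset]
        intro k
        rcases eq_or_ne k k0 with rfl | hk
        · simpa [hq, Function.update_self] using hvmem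
        · rw [hq, Function.update_of_ne hk]
          exact hmem i hi k
      rw [← hgridm] at hqmem
      obtain ⟨j, hj, hxj⟩ := Finset.mem_image.mp hqmem
      rw [Finset.mem_range] at hj
      refine ⟨j, Finset.mem_range.mpr (lt_of_lt_of_le hj hm1), ?_⟩
      -- coordinates of x j
      have hxj0 : x j 0 = v := by
        have := congrFun hxj k0
        simpa [hq, Function.update_self, hk0] using this
      have hxjk : ∀ k : Fin d₀, k ≠ k0 → x j (k : ℕ) = x i (k : ℕ) := by
        intro k hk
        have := congrFun hxj k
        rwa [hq, Function.update_of_ne hk] at this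
      -- |Δx₀| = 1
      have hx0cases : x j 0 = x i 0 + 1 ∨ x i 0 = x j 0 + 1 := by
        rw [hxj0, hv]
        split_ifs with h
        · left; rfl
        · right; omega
      have hΔx1 : |((x i 0 : ℝ) - x j 0)| = 1 := by
        rcases hx0cases with h | h
        · rw [h]; push_cast; rw [show ((x i 0 : ℝ)) - ((x i 0 : ℝ) + 1) = -1 by ring]
          simp
        · rw [h]; push_cast; rw [show ((x j 0 : ℝ) + 1) - (x j 0 : ℝ) = 1 by ring]
          simp
      -- lower bound a ≤ g
      have habs : |ξ i 0 - ξ j 0| ≤ 2 := by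
        have h1 := hξ i 0
        have h2 := hξ j 0
        calc |ξ i 0 - ξ j 0| ≤ |ξ i 0| + |ξ j 0| := abs_sub _ _
          _ ≤ 2 := by linarith
      have hga : a ≤ ‖F i - F j‖ := by
        have h1 := hlow i j 0 hd₀
        have h3 : |δ * (ξ i 0 - ξ j 0)| ≤ 2 * δ := by
          rw [abs_mul, abs_of_nonneg hδ0]
          nlinarith
        have h4 := abs_sub_abs_le_abs_sub ((x i 0 : ℝ) - x j 0) (-(δ * (ξ i 0 - ξ j 0)))
        rw [abs_neg, sub_neg_eq_add] at h4
        rw [ha]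
        rw [hΔx1] at h4
        linarith
      -- upper bound g ≤ Cb
      have hgC : ‖F i - F j‖ ≤ Cb := by
        have h1 := hup i j
        have h2 : ∀ k ∈ Finset.range d₀,
            |((x i k : ℝ) + δ * ξ i k) - ((x j k : ℝ) + δ * ξ j k)|
              ≤ |((x i k : ℝ) - x j k)| + 1 := by
          intro k hk
          have h3 : |δ * (ξ i k - ξ j k)| ≤ 1 := by
            rw [abs_mul, abs_of_nonneg hδ0]
            have h4 := hξ i k
            have h5 := hξ j k
            have h6 : |ξ i k - ξ j k| ≤ 2 := by
              calc |ξ i k - ξ j k| ≤ |ξ i k| + |ξ j k| := abs_sub _ _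
                _ ≤ 2 := by linarith
            nlinarith
          calc |((x i k : ℝ) + δ * ξ i k) - ((x j k : ℝ) + δ * ξ j k)|
              = |(((x i k : ℝ) - x j k)) + δ * (ξ i k - ξ j k)| := by ring_nf
            _ ≤ |((x i k : ℝ) - x j k)| + |δ * (ξ i k - ξ j k)| := abs_add_le _ _
            _ ≤ |((x i k : ℝ) - x j k)| + 1 := by linarith
        have hΔsum : ∑ k ∈ Finset.range d₀, |((x i k : ℝ) - x j k)| = 1 := by
          rw [Finset.sum_eq_single_of_mem 0 (Finset.mem_range.mpr hd₀)]
          · exact hΔx1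
          · intro k hk hk0'
            rw [Finset.mem_range] at hk
            have : x j k = x i k := hxjk ⟨k, hk⟩ (by simp [hk0, Fin.ext_iff, hk0'])
            rw [this]
            simp
        have h7 : (∑ k ∈ Finset.range d₀,
            |((x i k : ℝ) + δ * ξ i k) - ((x j k : ℝ) + δ * ξ j k)|)
            ≤ 1 + d₀ := by
          calc (∑ k ∈ Finset.range d₀,
              |((x i k : ℝ) + δ * ξ i k) - ((x j k : ℝ) + δ * ξ j k)|)
              ≤ ∑ k ∈ Finset.range d₀, (|((x i k : ℝ) - x j k)| + 1) :=
                Finset.sum_le_sum h2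
            _ = 1 + d₀ := by
                rw [Finset.sum_add_distrib, hΔsum]
                simp
        rw [hCb]
        linarith
      -- conclude
      have hE2 : (0:ℝ) < Real.exp (-θ₂ * ‖F i - F j‖) := Real.exp_pos _
      have hmul : a * Real.exp (-θ₂ * Cb) ≤ ‖F i - F j‖ * Real.exp (-θ₂ * ‖F i - F j‖) := by
        refine mul_le_mul hga ?_ (Real.exp_pos _).le (norm_nonneg _)
        exact Real.exp_le_exp.mpr (by nlinarith)
      have hsq : (lam₂ * θ₁ * (a * Real.exp (-θ₂ * Cb))) ^ 2
          ≤ (lam₂ * θ₁ * (‖F i - F j‖ * Real.exp (-θ₂ * ‖F i - F j‖))) ^ 2 := by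
        have h8 : (lam₂ * θ₁) ^ 2 * (a * Real.exp (-θ₂ * Cb)) ^ 2
            ≤ (lam₂ * θ₁) ^ 2 * (‖F i - F j‖ * Real.exp (-θ₂ * ‖F i - F j‖)) ^ 2 :=
          mul_le_mul_of_nonneg_left (pow_le_pow_left₀ (by positivity) hmul 2) (sq_nonneg _)
        calc (lam₂ * θ₁ * (a * Real.exp (-θ₂ * Cb))) ^ 2
            = (lam₂ * θ₁) ^ 2 * (a * Real.exp (-θ₂ * Cb)) ^ 2 := by ring
          _ ≤ (lam₂ * θ₁) ^ 2 * (‖F i - F j‖ * Real.exp (-θ₂ * ‖F i - F j‖)) ^ 2 := h8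
          _ = (lam₂ * θ₁ * (‖F i - F j‖ * Real.exp (-θ₂ * ‖F i - F j‖))) ^ 2 := by ring
      have htij : t i j = (lam₂ * θ₁ * (‖F i - F j‖ * Real.exp (-θ₂ * ‖F i - F j‖))) ^ 2 := by
        rw [ht]
        ring
      rw [htij, hc₀]
      calc (lam₂ * θ₁ * a * Real.exp (-θ₂ * Cb)) ^ 2
          = (lam₂ * θ₁ * (a * Real.exp (-θ₂ * Cb))) ^ 2 := by ring
        _ ≤ _ := hsq
    -- sum up
    have hsum1 : (m ^ d₀ : ℝ) * c₀ ≤ ∑ i ∈ Finset.range n, ∑ j ∈ Finset.range n, t i j := by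
      have step1 : ∀ i ∈ Finset.range (m ^ d₀), c₀ ≤ ∑ j ∈ Finset.range n, t i j := by
        intro i hi
        obtain ⟨j, hj, hc⟩ := key i hi
        exact le_trans hc (Finset.single_le_sum (fun j' _ => htnn i j') hj)
      calc (m ^ d₀ : ℝ) * c₀ = ∑ _i ∈ Finset.range (m ^ d₀), c₀ := by
            simp [mul_comm]
        _ ≤ ∑ i ∈ Finset.range (m ^ d₀), ∑ j ∈ Finset.range n, t i j :=
            Finset.sum_le_sum step1
        _ ≤ ∑ i ∈ Finset.range n, ∑ j ∈ Finset.range n, t i j :=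
            Finset.sum_le_sum_of_subset_of_nonneg (Finset.range_subset_range.mpr hm1)
              (fun i _ _ => Finset.sum_nonneg fun j _ => htnn i j)
    have hnR : (0:ℝ) < (n : ℝ) := by exact_mod_cast hn1
    have h2m : (n : ℝ) ≤ 2 ^ d₀ * (m : ℝ) ^ d₀ := by
      have hnat : n ≤ 2 ^ d₀ * m ^ d₀ := by
        calc n ≤ (m + 1) ^ d₀ := hm2.le
          _ ≤ (2 * m) ^ d₀ := Nat.pow_le_pow_left (by omega) d₀
          _ = 2 ^ d₀ * m ^ d₀ := by rw [mul_pow]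
      exact_mod_cast hnat
    calc c₀ / 2 ^ d₀ ≤ ((m : ℝ) ^ d₀ * c₀) / n := by
          rw [div_le_div_iff₀ (by positivity) hnR]
          nlinarith [hc₀0.le]
      _ = 1 / (n : ℝ) * ((m : ℝ) ^ d₀ * c₀) := by ring
      _ ≤ _ := mul_le_mul_of_nonneg_left hsum1 (by positivity)
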